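/- For every m ≥ 1, every a ∈ ℝᵐ, every μ ∈ ℝᵐ, the function ψ(t) := log(Σᵢ e^{aᵢt + μᵢ}) satisfies |ψ'''(t)| ≤ √6·‖a‖₂·ψ''(t) for all t ∈ ℝ. -/

import Mathlib

/-- The log-sum-exp function along a line, `ψ(t) = log ∑ᵢ e^{aᵢ t + μᵢ}`, satisfies
`|ψ'''(t)| ≤ √6 ‖a‖₂ ψ''(t)` for all `t`. -/
theorem logSumExp_third_deriv_bound (m : ℕ) (hm : 1 ≤ m) (a μ : Fin m → ℝ) (t : ℝ) :
    |deriv^[3] (fun s : ℝ => Real.log (∑ i, Real.exp (a i * s + μ i))) t| ≤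
      Real.sqrt 6 * Real.sqrt (∑ i, a i ^ 2) *
        deriv^[2] (fun s : ℝ => Real.log (∑ i, Real.exp (a i * s + μ i))) t := by
  haveI : NeZero m := ⟨by omega⟩
  set f : ℕ → ℝ → ℝ := fun k s => ∑ i, (a i)^k * Real.exp (a i * s + μ i) with hf_def
  have hpos : ∀ s, 0 < f 0 s := by
    intro s
    apply Finset.sum_pos
    · intro i _; positivity
    · exact Finset.univ_nonempty
  have hder : ∀ k s, HasDerivAt (f k) (f (k+1) s) s := by
    intro k s
    apply HasDerivAt.fun_sum
    intro i _
    have h1 : HasDerivAt (fun x : ℝ => a i * x + μ i) (a i) s := by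
      simpa using ((hasDerivAt_id s).const_mul (a i)).add_const (μ i)
    have h2 := (h1.exp).const_mul ((a i)^k)
    convert h2 using 1
    · rfl
    ring
  have hψ : ∀ s, HasDerivAt (fun s : ℝ => Real.log (∑ i, Real.exp (a i * s + μ i)))
      (f 1 s / f 0 s) s := by
    intro s
    have h0 : (fun s : ℝ => ∑ i, Real.exp (a i * s + μ i)) = f 0 := by
      funext s; simp [hf_def]
    have := (hder 0 s).log (hpos s).ne'
    rw [← h0] at this
    convert this using 1
    simp [hf_def, div_eq_div_iff (hpos s).ne']
  -- first derivative
  have hd1 : deriv (fun s : ℝ => Real.log (∑ i, Real.exp (a i * s + μ i)))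
      = fun s => f 1 s / f 0 s := by
    funext s; exact (hψ s).deriv
  -- second derivative
  have hd2fun : ∀ s, HasDerivAt (fun s => f 1 s / f 0 s)
      ((f 2 s * f 0 s - f 1 s * f 1 s) / (f 0 s)^2) s := by
    intro s
    exact (hder 1 s).div (hder 0 s) (hpos s).ne'
  have hd2 : deriv^[2] (fun s : ℝ => Real.log (∑ i, Real.exp (a i * s + μ i)))
      = fun s => (f 2 s * f 0 s - f 1 s * f 1 s) / (f 0 s)^2 := by
    rw [show (2:ℕ) = 1 + 1 from rfl, Function.iterate_succ_apply', Function.iterate_one, hd1]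
    funext s
    exact (hd2fun s).deriv
  -- third derivative
  have hd3 : deriv^[3] (fun s : ℝ => Real.log (∑ i, Real.exp (a i * s + μ i))) t
      = (f 3 t * (f 0 t)^2 - 3 * f 2 t * f 1 t * f 0 t + 2 * (f 1 t)^3) / (f 0 t)^3 := by
    rw [show (3:ℕ) = 2 + 1 from rfl, Function.iterate_succ_apply', hd2]
    have hden : HasDerivAt (fun s => (f 0 s)^2) (2 * f 0 t ^ 1 * f 1 t) t := by
      simpa using (hder 0 t).fun_pow 2
    have hnum : HasDerivAt (fun s => f 2 s * f 0 s - f 1 s * f 1 s)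
        ((f 3 t * f 0 t + f 2 t * f 1 t) - (f 2 t * f 1 t + f 1 t * f 2 t)) t :=
      ((hder 2 t).mul (hder 0 t)).sub ((hder 1 t).mul (hder 1 t))
    have hP0 : (f 0 t)^2 ≠ 0 := by positivity
    have h := hnum.fun_div hden hP0
    rw [h.deriv]
    have h0 := (hpos t).ne'
    field_simp
    ring
  -- central moment expressions
  set P := f 0 t with hP
  set A := f 1 t / P with hA
  have hPpos : 0 < P := hpos t
  have hAP : f 1 t = A * P := by rw [hA]; field_simp
  have moment2 : ∑ i, (a i - A)^2 * Real.exp (a i * t + μ i)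
      = f 2 t - 2*A*f 1 t + A^2 * P := by
    have h : ∀ i ∈ Finset.univ, (a i - A)^2 * Real.exp (a i * t + μ i)
        = (a i)^2 * Real.exp (a i * t + μ i) - 2*A*((a i)^1 * Real.exp (a i * t + μ i))
          + A^2 * ((a i)^0 * Real.exp (a i * t + μ i)) := by intro i _; ring
    rw [Finset.sum_congr rfl h]
    simp only [Finset.sum_add_distrib, Finset.sum_sub_distrib, ← Finset.mul_sum, hf_def, hP]
  have moment3 : ∑ i, (a i - A)^3 * Real.exp (a i * t + μ i)
      = f 3 t - 3*A*f 2 t + 3*A^2 * f 1 t - A^3 * P := by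
    have h : ∀ i ∈ Finset.univ, (a i - A)^3 * Real.exp (a i * t + μ i)
        = (a i)^3 * Real.exp (a i * t + μ i) - 3*A*((a i)^2 * Real.exp (a i * t + μ i))
          + 3*A^2 * ((a i)^1 * Real.exp (a i * t + μ i))
          - A^3 * ((a i)^0 * Real.exp (a i * t + μ i)) := by intro i _; ring
    rw [Finset.sum_congr rfl h]
    simp only [Finset.sum_add_distrib, Finset.sum_sub_distrib, ← Finset.mul_sum, hf_def, hP]
  set Q2 := ∑ i, (a i - A)^2 * Real.exp (a i * t + μ i) with hQ2
  set Q3 := ∑ i, (a i - A)^3 * Real.exp (a i * t + μ i) with hQ3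
  have key2 : (f 2 t * P - f 1 t * f 1 t) / P^2 = Q2 / P := by
    rw [moment2, hAP]; field_simp; ring
  have key3 : (f 3 t * P^2 - 3 * f 2 t * f 1 t * P + 2 * (f 1 t)^3) / P^3 = Q3 / P := by
    rw [moment3, hAP]; field_simp; ring
  rw [hd3, key3, hd2]
  show |Q3 / P| ≤ _ * ((f 2 t * P - f 1 t * f 1 t) / P ^ 2)
  rw [key2]
  -- the pointwise bound
  set R := Real.sqrt (∑ i, a i ^ 2) with hR
  have hRnn : 0 ≤ R := Real.sqrt_nonneg _
  have habs_a : ∀ i, |a i| ≤ R := by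
    intro i
    apply Real.abs_le_sqrt
    exact Finset.single_le_sum (fun j _ => sq_nonneg (a j)) (Finset.mem_univ i)
  have habs_A : |A| ≤ R := by
    rw [hA, abs_div, abs_of_pos hPpos, div_le_iff₀ hPpos]
    calc |f 1 t| ≤ ∑ i, |(a i)^1 * Real.exp (a i * t + μ i)| :=
          Finset.abs_sum_le_sum_abs _ _
      _ ≤ ∑ i, R * Real.exp (a i * t + μ i) := by
          apply Finset.sum_le_sum
          intro i _
          rw [abs_mul, pow_one, abs_of_pos (Real.exp_pos _)]
          exact mul_le_mul_of_nonneg_right (habs_a i) (Real.exp_pos _).le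
      _ = R * P := by
          simp [hP, hf_def, Finset.mul_sum]
  have h26 : (2:ℝ) ≤ Real.sqrt 6 := by
    nlinarith [Real.sq_sqrt (show (0:ℝ) ≤ 6 by norm_num), Real.sqrt_nonneg 6]
  set C := Real.sqrt 6 * R with hC
  have habs : ∀ i, |a i - A| ≤ C := by
    intro i
    calc |a i - A| ≤ |a i| + |A| := abs_sub _ _
      _ ≤ R + R := add_le_add (habs_a i) habs_A
      _ = 2 * R := by ring
      _ ≤ Real.sqrt 6 * R := mul_le_mul_of_nonneg_right h26 hRnn
  have hQ2nn : 0 ≤ Q2 := by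
    apply Finset.sum_nonneg
    intro i _; positivity
  have hmain : |Q3| ≤ C * Q2 := by
    calc |Q3| ≤ ∑ i, |(a i - A)^3 * Real.exp (a i * t + μ i)| :=
          Finset.abs_sum_le_sum_abs _ _
      _ ≤ ∑ i, C * ((a i - A)^2 * Real.exp (a i * t + μ i)) := by
          apply Finset.sum_le_sum
          intro i _
          rw [abs_mul, abs_of_pos (Real.exp_pos _), abs_pow]
          calc |a i - A|^3 * Real.exp (a i * t + μ i)
              = |a i - A| * (|a i - A|^2 * Real.exp (a i * t + μ i)) := by ring
            _ = |a i - A| * ((a i - A)^2 * Real.exp (a i * t + μ i)) := by rw [sq_abs]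
            _ ≤ C * ((a i - A)^2 * Real.exp (a i * t + μ i)) :=
                mul_le_mul_of_nonneg_right (habs i) (by positivity)
      _ = C * Q2 := by rw [← Finset.mul_sum]
  rw [abs_div, abs_of_pos hPpos, div_le_iff₀ hPpos]
  calc |Q3| ≤ C * Q2 := hmain
    _ = C * (Q2 / P) * P := by field_simp
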